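/- Let t and a_1, …, a_m be positive integers with Σ_{i=1}^m a_i divisible by t, let S := Σ_{i=1}^m a_i, let M := 13·S², and let n := m+1. Define p ∈ [0,1]^n by p_i := a_i/M⁴ for i ∈ [m] and p_{m+1} := 1/M⁶, define c ∈ ℝ^n by c_i := a_i for i ∈ [m] and c_{m+1} := 2M, and let γ := S²/(t·M⁴) + 6/M⁵. Suppose (I_j)_{j=1}^t is a partition of [m] with Σ_{i∈I_j} a_i = S/t for all j ∈ [t]. For j ∈ [t] define b^j ∈ {0,1}^{m+1} by b^j_i = 1 ⟺ i ∈ I_j (so b^j_{m+1} = 0), and let B := {𝟎, 𝟙} ∪ { b^j : j ∈ [t] }. Then B is a Pareto cover of μ_p with E_{μ_p}[c_B] ≤ γ. -/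

import Mathlib

/-- The weight `μ_p({x}) = ∏_{i : x_i = 1} p_i · ∏_{i : x_i = 0} (1 − p_i)` of a point
`x ∈ {0,1}^n` under the product Bernoulli measure `μ_p`. -/
noncomputable def bweight {n : ℕ} (p : Fin n → ℝ) (x : Fin n → Bool) : ℝ :=
  ∏ i, if x i then p i else 1 - p i

/-- The cost `cᵀb` of a binary vector `b ∈ {0,1}^n`. -/
noncomputable def bcost {n : ℕ} (c : Fin n → ℝ) (b : Fin n → Bool) : ℝ :=
  ∑ i, if b i then c i else 0

/-- `c_B(x) = min { cᵀb : b ∈ B, x ≤ b }` (with the convention `sInf ∅ = 0`;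
for a Pareto cover the uncovered points have measure zero). -/
noncomputable def bmin {n : ℕ} (c : Fin n → ℝ) (B : Finset (Fin n → Bool)) (x : Fin n → Bool) : ℝ :=
  sInf (bcost c '' {b | b ∈ B ∧ x ≤ b})

/-- `E_{μ_p}[c_B] = Σ_{x ∈ {0,1}^n} μ_p({x}) · c_B(x)`. -/
noncomputable def bexp {n : ℕ} (p c : Fin n → ℝ) (B : Finset (Fin n → Bool)) : ℝ :=
  ∑ x : Fin n → Bool, bweight p x * bmin c B x

-- `B` is a Pareto cover of `μ_p`: the covered points have total measure `1`.
open Classical in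
noncomputable def bcover {n : ℕ} (p : Fin n → ℝ) (B : Finset (Fin n → Bool)) : Prop :=
  (∑ x : Fin n → Bool, if ∃ b ∈ B, x ≤ b then bweight p x else 0) = 1

lemma master : ∀ {n : ℕ} (f : Fin n → Bool → ℝ),
    ∑ x : Fin n → Bool, ∏ i, f i (x i) = ∏ i, (f i false + f i true) := by
  intro n
  induction n with
  | zero => intro f; simp
  | succ n ih =>
    intro f
    rw [← (Fin.consEquiv (fun _ : Fin (n+1) => Bool)).sum_comp, Fintype.sum_prod_type,
      Fintype.sum_bool]
    simp only [Fin.consEquiv_apply, Fin.prod_univ_succ, Fin.cons_zero, Fin.cons_succ]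
    rw [← Finset.mul_sum, ← Finset.mul_sum, ih (fun i b => f i.succ b)]
    ring

lemma marginal {n : ℕ} (p : Fin n → ℝ) (T : Finset (Fin n)) :
    ∑ x : Fin n → Bool, (if ∀ i ∈ T, x i = true then bweight p x else 0)
      = ∏ i ∈ T, p i := by
  classical
  have h := master (fun i b => if i ∈ T then (if b then p i else 0) else (if b then p i else 1 - p i))
  rw [Finset.sum_congr rfl (fun x _ => ?_)] at h
  · rw [h, Finset.prod_congr rfl (fun i _ => ?_), Finset.prod_ite_mem, Finset.univ_inter]
    by_cases hi : i ∈ T <;> simp [hi] <;> ring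
  · by_cases hx : ∀ i ∈ T, x i = true
    · rw [if_pos hx]
      unfold bweight
      exact Finset.prod_congr rfl (fun i _ => by
        by_cases hi : i ∈ T
        · simp [hi, hx i hi]
        · simp [hi])
    · rw [if_neg hx]
      push_neg at hx
      obtain ⟨i, hiT, hxi⟩ := hx
      refine Finset.prod_eq_zero (Finset.mem_univ i) ?_
      simp [hiT, hxi]

lemma sum_bweight {n : ℕ} (p : Fin n → ℝ) : ∑ x : Fin n → Bool, bweight p x = 1 := by
  have h := marginal p ∅
  simpa using h

set_option maxHeartbeats 1000000 in
open Classical in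
theorem stmt12 {m : ℕ} (t : ℕ) (ht : 0 < t) (a : Fin m → ℕ) (ha : ∀ i, 0 < a i)
    (S M : ℕ) (hS : S = ∑ i, a i) (hdvd : t ∣ S) (hM : M = 13 * S^2)
    (p c : Fin (m+1) → ℝ)
    (hp1 : ∀ i : Fin m, p i.castSucc = (a i : ℝ) / (M : ℝ)^4)
    (hp2 : p (Fin.last m) = 1 / (M : ℝ)^6)
    (hc1 : ∀ i : Fin m, c i.castSucc = (a i : ℝ))
    (hc2 : c (Fin.last m) = 2 * (M : ℝ))
    (γ : ℝ) (hγ : γ = (S : ℝ)^2 / ((t : ℝ) * (M : ℝ)^4) + 6 / (M : ℝ)^5)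
    (I : Fin t → Finset (Fin m))
    (hpart : ∀ i : Fin m, ∃! j, i ∈ I j)
    (hsum : ∀ j, t * ∑ i ∈ I j, a i = S)
    (b : Fin t → Fin (m+1) → Bool)
    (hb1 : ∀ j (i : Fin m), b j i.castSucc = true ↔ i ∈ I j)
    (hb2 : ∀ j, b j (Fin.last m) = false)
    (B : Finset (Fin (m+1) → Bool))
    (hB : B = insert (fun _ => false) (insert (fun _ => true) (Finset.univ.image b))) :
    bcover p B ∧ bexp p c B ≤ γ := by
  have hone : (fun _ => true) ∈ B := by rw [hB]; simp
  have hzero : (fun _ => false) ∈ B := by rw [hB]; simp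
  have hbj : ∀ j, b j ∈ B := by
    intro j; rw [hB]
    simp only [Finset.mem_insert, Finset.mem_image, Finset.mem_univ, true_and]
    exact Or.inr (Or.inr ⟨j, rfl⟩)
  have hcov : ∀ x : Fin (m+1) → Bool, ∃ b' ∈ B, x ≤ b' :=
    fun x => ⟨fun _ => true, hone, fun i => Bool.le_true _⟩
  -- general facts about bmin
  have hcnn : ∀ i, (0:ℝ) ≤ c i := by
    intro i
    induction i using Fin.lastCases with
    | last => rw [hc2]; positivity
    | cast i => rw [hc1]; positivity
  have hminle : ∀ (x b₀ : Fin (m+1) → Bool), b₀ ∈ B → x ≤ b₀ → bmin c B x ≤ bcost c b₀ := by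
    intro x b₀ hb₀ hxb
    refine csInf_le ?_ ⟨b₀, ⟨hb₀, hxb⟩, rfl⟩
    exact ((B.finite_toSet.image (bcost c)).bddBelow).mono
      (Set.image_mono (fun y hy => hy.1))
  have hminnn : ∀ x, 0 ≤ bmin c B x := by
    intro x
    refine Real.sInf_nonneg ?_
    rintro y ⟨b', _, rfl⟩
    refine Finset.sum_nonneg fun i _ => ?_
    split
    · exact hcnn i
    · exact le_refl 0
  refine ⟨?_, ?_⟩
  · unfold bcover
    rw [Finset.sum_congr rfl fun x _ => if_pos (hcov x)]
    exact sum_bweight p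
  · -- the expectation bound
    rcases Nat.eq_zero_or_pos m with hm | hm
    · -- degenerate case m = 0
      subst hm
      have hS0 : S = 0 := by simp [hS]
      have hM0 : M = 0 := by simp [hM, hS0]
      have hγ0 : γ = 0 := by simp [hγ, hM0]
      have hc0 : ∀ b' : Fin 1 → Bool, bcost c b' = 0 := by
        intro b'
        unfold bcost
        rw [Fin.sum_univ_one]
        have : c 0 = 0 := by
          have := hc2
          simp only [Fin.last] at this
          rw [show (0 : Fin 1) = Fin.last 0 from rfl, hc2, hM0]
          simp
        simp [this]
      have hbm : ∀ x : Fin 1 → Bool, bmin c B x = 0 := by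
        intro x
        unfold bmin
        have heq : bcost c '' {b | b ∈ B ∧ x ≤ b} = {0} := by
          apply Set.eq_singleton_iff_nonempty_unique_mem.mpr
          refine ⟨?_, ?_⟩
          · obtain ⟨b', hb', hxb⟩ := hcov x
            exact ⟨bcost c b', ⟨b', ⟨hb', hxb⟩, rfl⟩⟩
          · rintro y ⟨b', _, rfl⟩; exact hc0 b'
        rw [heq, csInf_singleton]
      rw [hγ0]
      unfold bexp
      rw [Finset.sum_congr rfl fun x _ => by rw [hbm x, mul_zero]]
      simp
    · -- main case : m ≥ 1
      have hS1 : 1 ≤ S := by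
        rw [hS]
        calc 1 ≤ a ⟨0, hm⟩ := ha _
        _ ≤ ∑ i, a i := Finset.single_le_sum (fun i _ => Nat.zero_le _) (Finset.mem_univ _)
      have hM13 : 13 ≤ M := by rw [hM]; nlinarith
      have hsr1 : (1:ℝ) ≤ (S:ℝ) := by exact_mod_cast hS1
      have htr1 : (1:ℝ) ≤ (t:ℝ) := by exact_mod_cast ht
      have hMr13 : (13:ℝ) ≤ (M:ℝ) := by exact_mod_cast hM13
      have hMrpos : (0:ℝ) < (M:ℝ) := by linarith
      have hMr1 : (1:ℝ) ≤ (M:ℝ) := by linarith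
      have hMreq : (M:ℝ) = 13*(S:ℝ)^2 := by rw [hM]; push_cast; ring
      have hsM : (S:ℝ) ≤ (M:ℝ) := by nlinarith
      have hp_nn : ∀ i, 0 ≤ p i ∧ p i ≤ 1 := by
        intro i
        induction i using Fin.lastCases with
        | last =>
          rw [hp2]
          constructor
          · positivity
          · rw [div_le_one (by positivity)]
            calc (1:ℝ) ≤ (M:ℝ) := hMr1
            _ ≤ (M:ℝ)^6 := le_self_pow₀ hMr1 (by norm_num)
        | cast i =>
          rw [hp1]
          have hai : (a i : ℝ) ≤ (S:ℝ) := by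
            exact_mod_cast hS ▸ Finset.single_le_sum (f := fun i => a i)
              (fun i _ => Nat.zero_le _) (Finset.mem_univ i)
          constructor
          · positivity
          · rw [div_le_one (by positivity)]
            calc (a i : ℝ) ≤ (S:ℝ) := hai
            _ ≤ (M:ℝ) := hsM
            _ ≤ (M:ℝ)^4 := le_self_pow₀ hMr1 (by norm_num)
      have hwnn : ∀ x, 0 ≤ bweight p x := by
        intro x
        refine Finset.prod_nonneg fun i _ => ?_
        rcases hp_nn i with ⟨h0, h1⟩
        split
        · exact h0
        · linarith
      -- costs of the elements of B
      have hsums : ∑ i : Fin m, (a i : ℝ) = (S:ℝ) := by rw [hS, Nat.cast_sum]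
      have hcost_one : bcost c (fun _ => true) = (S:ℝ) + 2*(M:ℝ) := by
        unfold bcost
        simp only [if_true]
        rw [Fin.sum_univ_castSucc]
        simp only [hc1, hc2]
        rw [hsums]
      have hcost_zero : bcost c (fun _ => false) = 0 := by simp [bcost]
      have hcost_b : ∀ j, bcost c (b j) = (S:ℝ) / (t:ℝ) := by
        intro j
        unfold bcost
        rw [Fin.sum_univ_castSucc, hb2 j]
        simp only [if_false, Bool.false_eq_true, add_zero]
        rw [Finset.sum_congr rfl (fun i _ => ?_), Finset.sum_ite_mem, Finset.univ_inter]
        · have h := hsum j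
          have h' : (t:ℝ) * (∑ i ∈ I j, (a i:ℝ)) = (S:ℝ) := by exact_mod_cast h
          rw [eq_div_iff (by linarith : (t:ℝ) ≠ 0), mul_comm]
          exact h'
        · show (if b j i.castSucc then c i.castSucc else 0) = if i ∈ I j then (a i:ℝ) else 0
          by_cases hij : i ∈ I j
          · rw [if_pos ((hb1 j i).mpr hij), if_pos hij, hc1]
          · rw [if_neg hij, if_neg (fun h => hij ((hb1 j i).mp h))]
      -- the pointwise bound
      have key : ∀ x : Fin (m+1) → Bool, bweight p x * bmin c B x ≤
          ((S:ℝ)/(t:ℝ)) * (∑ i : Fin m, if x i.castSucc = true then bweight p x else 0)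
          + ((S:ℝ) + 2*(M:ℝ)) * ((if x (Fin.last m) = true then bweight p x else 0)
            + ∑ q ∈ ((Finset.univ : Finset (Fin m)).offDiag),
                (if ∀ k ∈ ({q.1.castSucc, q.2.castSucc} : Finset (Fin (m+1))), x k = true
                 then bweight p x else 0)) := by
        intro x
        have hWx := hwnn x
        have hF1 : 0 ≤ ∑ i : Fin m, (if x i.castSucc = true then bweight p x else 0) :=
          Finset.sum_nonneg fun i _ => by split <;> simp [hWx]
        have hF2 : 0 ≤ (if x (Fin.last m) = true then bweight p x else 0) := by
          split <;> simp [hWx]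
        have hF3 : 0 ≤ ∑ q ∈ ((Finset.univ : Finset (Fin m)).offDiag),
            (if ∀ k ∈ ({q.1.castSucc, q.2.castSucc} : Finset (Fin (m+1))), x k = true
             then bweight p x else 0) :=
          Finset.sum_nonneg fun q _ => by split <;> simp [hWx]
        have hst : (0:ℝ) ≤ (S:ℝ)/(t:ℝ) := by positivity
        have h2M : (0:ℝ) ≤ (S:ℝ) + 2*(M:ℝ) := by linarith
        by_cases hxl : x (Fin.last m) = true
        · have h1 : bmin c B x ≤ (S:ℝ) + 2*(M:ℝ) :=
            hcost_one ▸ hminle x _ hone (fun k => Bool.le_true _)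
          rw [if_pos hxl]
          have l1 := mul_le_mul_of_nonneg_left h1 hWx
          linarith [mul_nonneg hst hF1, mul_nonneg h2M hF3]
        · have hxlf : x (Fin.last m) = false := by revert hxl; cases x (Fin.last m) <;> simp
          rw [if_neg hxl]
          by_cases hx0 : ∀ i : Fin m, x i.castSucc = false
          · have hxz : x ≤ (fun _ => false) := by
              intro k
              induction k using Fin.lastCases with
              | last => rw [hxlf]
              | cast i => rw [hx0 i]
            have h1 : bmin c B x ≤ 0 := hcost_zero ▸ hminle x _ hzero hxz
            have h0 : bmin c B x = 0 := le_antisymm h1 (hminnn x)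
            rw [h0, mul_zero]
            linarith [mul_nonneg hst hF1, mul_nonneg h2M hF3]
          · push_neg at hx0
            obtain ⟨i, hi⟩ := hx0
            have hi' : x i.castSucc = true := by revert hi; cases x i.castSucc <;> simp
            obtain ⟨j, hij, -⟩ := hpart i
            by_cases hsub : ∀ i' : Fin m, x i'.castSucc = true → i' ∈ I j
            · have hxb : x ≤ b j := by
                intro k
                induction k using Fin.lastCases with
                | last => rw [hxlf]; exact Bool.false_le _
                | cast i' =>
                  cases hx' : x i'.castSucc with
                  | false => exact Bool.false_le _
                  | true => rw [(hb1 j i').mpr (hsub i' hx')]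
              have h1 : bmin c B x ≤ (S:ℝ)/(t:ℝ) := hcost_b j ▸ hminle x _ (hbj j) hxb
              have hge : bweight p x ≤
                  ∑ i' : Fin m, (if x i'.castSucc = true then bweight p x else 0) := by
                have := Finset.single_le_sum
                  (f := fun i' : Fin m => if x i'.castSucc = true then bweight p x else 0)
                  (fun i' _ => by split <;> simp [hWx]) (Finset.mem_univ i)
                rwa [if_pos hi'] at this
              have l1 := mul_le_mul_of_nonneg_left h1 hWx
              have l2 := mul_le_mul_of_nonneg_left hge hst
              linarith [mul_nonneg h2M hF3]
            · push_neg at hsub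
              obtain ⟨i', hxi', hi'I⟩ := hsub
              have hne : i ≠ i' := fun h => hi'I (h ▸ hij)
              have h1 : bmin c B x ≤ (S:ℝ) + 2*(M:ℝ) :=
                hcost_one ▸ hminle x _ hone (fun k => Bool.le_true _)
              have hge : bweight p x ≤ ∑ q ∈ ((Finset.univ : Finset (Fin m)).offDiag),
                  (if ∀ k ∈ ({q.1.castSucc, q.2.castSucc} : Finset (Fin (m+1))), x k = true
                   then bweight p x else 0) := by
                have hmem : (i, i') ∈ (Finset.univ : Finset (Fin m)).offDiag :=
                  Finset.mem_offDiag.mpr ⟨Finset.mem_univ _, Finset.mem_univ _, hne⟩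
                have := Finset.single_le_sum
                  (f := fun q : Fin m × Fin m =>
                    if ∀ k ∈ ({q.1.castSucc, q.2.castSucc} : Finset (Fin (m+1))), x k = true
                    then bweight p x else 0)
                  (fun q _ => by split <;> simp [hWx]) hmem
                dsimp only at this
                rwa [if_pos ?_] at this
                intro k hk
                rcases Finset.mem_insert.mp hk with h | h
                · rw [h]; exact hi'
                · rw [Finset.mem_singleton.mp h]; exact hxi'
              have l1 := mul_le_mul_of_nonneg_left h1 hWx
              have l2 := mul_le_mul_of_nonneg_left hge h2M
              linarith [mul_nonneg hst hF1]
      -- marginal computations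
      have hmarg1 : ∀ i : Fin m, (∑ x : Fin (m+1) → Bool,
          if x i.castSucc = true then bweight p x else 0) = p i.castSucc := by
        intro i
        simpa using marginal p {i.castSucc}
      have hmarg2 : (∑ x : Fin (m+1) → Bool,
          if x (Fin.last m) = true then bweight p x else 0) = p (Fin.last m) := by
        simpa using marginal p {Fin.last m}
      have hsump : ∑ i : Fin m, p i.castSucc = (S:ℝ) / (M:ℝ)^4 := by
        simp only [hp1]
        rw [← Finset.sum_div, hsums]
      have hT1 : (∑ x : Fin (m+1) → Bool, ∑ i : Fin m,
          if x i.castSucc = true then bweight p x else 0) = (S:ℝ)/(M:ℝ)^4 := by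
        rw [Finset.sum_comm, Finset.sum_congr rfl (fun i _ => hmarg1 i), hsump]
      have hT3 : (∑ x : Fin (m+1) → Bool, ∑ q ∈ ((Finset.univ : Finset (Fin m)).offDiag),
          (if ∀ k ∈ ({q.1.castSucc, q.2.castSucc} : Finset (Fin (m+1))), x k = true
           then bweight p x else 0)) ≤ ((S:ℝ)/(M:ℝ)^4)^2 := by
        rw [Finset.sum_comm, Finset.sum_congr rfl (fun q hq => ?_)]
        · calc (∑ q ∈ ((Finset.univ : Finset (Fin m)).offDiag), p q.1.castSucc * p q.2.castSucc)
              ≤ ∑ q : Fin m × Fin m, p q.1.castSucc * p q.2.castSucc := by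
                exact Finset.sum_le_sum_of_subset_of_nonneg (Finset.subset_univ _)
                  (fun q _ _ => mul_nonneg (hp_nn _).1 (hp_nn _).1)
          _ = (∑ i : Fin m, p i.castSucc) * (∑ i : Fin m, p i.castSucc) := by
            rw [Fintype.sum_prod_type, Fintype.sum_mul_sum]
          _ = ((S:ℝ)/(M:ℝ)^4)^2 := by rw [hsump]; ring
        · rw [marginal p {q.1.castSucc, q.2.castSucc}]
          refine Finset.prod_pair ?_
          exact fun h =>
            (Finset.mem_offDiag.mp hq).2.2 (Fin.castSucc_injective m h)
      -- put everything together
      calc bexp p c B = ∑ x : Fin (m+1) → Bool, bweight p x * bmin c B x := rfl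
      _ ≤ ∑ x : Fin (m+1) → Bool,
            (((S:ℝ)/(t:ℝ)) * (∑ i : Fin m, if x i.castSucc = true then bweight p x else 0)
            + ((S:ℝ) + 2*(M:ℝ)) * ((if x (Fin.last m) = true then bweight p x else 0)
              + ∑ q ∈ ((Finset.univ : Finset (Fin m)).offDiag),
                  (if ∀ k ∈ ({q.1.castSucc, q.2.castSucc} : Finset (Fin (m+1))), x k = true
                   then bweight p x else 0))) := Finset.sum_le_sum fun x _ => key x
      _ = ((S:ℝ)/(t:ℝ)) * (∑ x : Fin (m+1) → Bool, ∑ i : Fin m,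
              if x i.castSucc = true then bweight p x else 0)
          + ((S:ℝ) + 2*(M:ℝ)) * ((∑ x : Fin (m+1) → Bool,
              if x (Fin.last m) = true then bweight p x else 0)
            + (∑ x : Fin (m+1) → Bool, ∑ q ∈ ((Finset.univ : Finset (Fin m)).offDiag),
                (if ∀ k ∈ ({q.1.castSucc, q.2.castSucc} : Finset (Fin (m+1))), x k = true
                 then bweight p x else 0))) := by
        rw [Finset.sum_add_distrib, ← Finset.mul_sum, ← Finset.mul_sum, Finset.sum_add_distrib]
      _ ≤ ((S:ℝ)/(t:ℝ)) * ((S:ℝ)/(M:ℝ)^4)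
          + ((S:ℝ) + 2*(M:ℝ)) * (1/(M:ℝ)^6 + ((S:ℝ)/(M:ℝ)^4)^2) := by
        rw [hT1, hmarg2, hp2]
        have h2M : (0:ℝ) ≤ (S:ℝ) + 2*(M:ℝ) := by linarith
        exact add_le_add_right
          (mul_le_mul_of_nonneg_left (add_le_add_right hT3 _) h2M) _
      _ ≤ γ := by
        rw [hγ]
        have e1 : ((S:ℝ)/(t:ℝ))*((S:ℝ)/(M:ℝ)^4) = (S:ℝ)^2/((t:ℝ)*(M:ℝ)^4) := by
          rw [div_mul_div_comm, sq]
        have e2 : ((S:ℝ)+2*(M:ℝ))*(1/(M:ℝ)^6 + ((S:ℝ)/(M:ℝ)^4)^2) ≤ 6/(M:ℝ)^5 := by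
          rw [show (1:ℝ)/(M:ℝ)^6 + ((S:ℝ)/(M:ℝ)^4)^2 = ((M:ℝ)^2 + (S:ℝ)^2)/(M:ℝ)^8 by
            field_simp]
          rw [show (6:ℝ)/(M:ℝ)^5 = 6*(M:ℝ)^3/(M:ℝ)^8 by
            field_simp]
          rw [← mul_div_assoc]
          rw [div_le_div_iff_of_pos_right (by positivity : (0:ℝ) < (M:ℝ)^8)]
          have q1 : (S:ℝ)*(M:ℝ)^2 ≤ (M:ℝ)^3 := by
            nlinarith [mul_le_mul_of_nonneg_right hsM (sq_nonneg (M:ℝ))]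
          have q2 : (S:ℝ)^3 ≤ (M:ℝ)^3 := pow_le_pow_left₀ (by linarith) hsM 3
          have q3 : (M:ℝ)*(S:ℝ)^2 ≤ (M:ℝ)^3 := by
            nlinarith [mul_le_mul_of_nonneg_left (pow_le_pow_left₀ (by linarith : (0:ℝ) ≤ (S:ℝ)) hsM 2) (le_of_lt hMrpos)]
          nlinarith [q1, q2, q3]
        rw [e1]
        linarith [e2]
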